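/- Let q, K ≥ 1 be integers, let U_1,…,U_K be subsets of {1,…,q}, and let y_1,…,y_K be nonnegative reals with ∑_{k : i ∈ U_k} y_k ≥ 1 for every item i ∈ {1,…,q}. Then there exist a probability space and random variables Y_1,…,Y_K taking values in {0,1} such that: (a) almost surely, for every item i there exists k with i ∈ U_k and Y_k = 1 (the random collection is a feasible set cover); and (b) E[Y_k] ≤ (1 + ln q)·y_k for every k. -/

import Mathlib

open MeasureTheory ProbabilityTheory Real
open scoped ENNReal

lemma aux_prod_bound {ι : Type*} (c : ℝ) (hc : 0 ≤ c) (s : Finset ι) (y : ι → ℝ)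
    (hy : ∀ j, 0 ≤ y j) (hS : 1 ≤ ∑ j ∈ s, y j) :
    ∏ j ∈ s, (1 - min 1 (c * y j)) ≤ Real.exp (-c) := by
  calc ∏ j ∈ s, (1 - min 1 (c * y j)) ≤ ∏ j ∈ s, Real.exp (-(c * y j)) := by
        apply Finset.prod_le_prod
        · intro j _
          have := min_le_left 1 (c * y j)
          linarith
        · intro j _
          rcases le_or_gt (c * y j) 1 with h | h
          · rw [min_eq_right h]
            have := Real.add_one_le_exp (-(c * y j))
            linarith
          · rw [min_eq_left h.le]
            simpa using (Real.exp_pos (-(c * y j))).le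
    _ = Real.exp (-(∑ j ∈ s, c * y j)) := by
        rw [← Real.exp_sum]
        simp
    _ ≤ Real.exp (-c) := by
        apply Real.exp_le_exp.mpr
        have h1 : c ≤ ∑ j ∈ s, c * y j := by
          rw [← Finset.mul_sum]
          nlinarith
        linarith

/-- a `(1 + ln q)`-competitive randomized rounding of any fractional
set cover: an integral random cover selecting each set with probability at most
`(1 + ln q)` times its fractional weight. -/
theorem stmt_15
    (q K : ℕ) (hq : 1 ≤ q) (hK : 1 ≤ K)
    (U : Fin K → Finset (Fin q))
    (y : Fin K → ℝ) (hy0 : ∀ k, 0 ≤ y k)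
    (hcover : ∀ i, 1 ≤ ∑ k ∈ Finset.univ.filter (fun k => i ∈ U k), y k) :
    ∃ (Ω : Type) (_ : MeasurableSpace Ω) (μ : Measure Ω) (_ : IsProbabilityMeasure μ)
      (Y : Fin K → Ω → ℝ),
      (∀ k, Measurable (Y k))
      ∧ (∀ k ω, Y k ω = 0 ∨ Y k ω = 1)
      ∧ (∀ᵐ ω ∂μ, ∀ i, ∃ k, i ∈ U k ∧ Y k ω = 1)
      ∧ (∀ k, ∫ ω, Y k ω ∂μ ≤ (1 + Real.log q) * y k) := by
  classical
  have hq1 : (1 : ℝ) ≤ (q : ℝ) := by exact_mod_cast hq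
  have hqpos : (0 : ℝ) < (q : ℝ) := lt_of_lt_of_le one_pos hq1
  set c : ℝ := Real.log q with hcdef
  have hc0 : 0 ≤ c := Real.log_nonneg hq1
  set S : Fin q → ℝ := fun i => ∑ k ∈ Finset.univ.filter (fun k => i ∈ U k), y k with hSdef
  have hS1 : ∀ i, 1 ≤ S i := hcover
  -- inclusion probabilities for round 1
  set p : Fin K → ℝ≥0∞ := fun k => ENNReal.ofReal (min 1 (c * y k)) with hpdef
  have hm0 : ∀ k, 0 ≤ min 1 (c * y k) := fun k =>
    le_min one_pos.le (mul_nonneg hc0 (hy0 k))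
  have hp1 : ∀ k, p k ≤ 1 := fun k => by
    simpa [hpdef] using ENNReal.ofReal_le_one.mpr (min_le_left _ _)
  let bern : Fin K → PMF Bool := fun k => PMF.bernoulli (p k).toNNReal
    (by simpa using ENNReal.toNNReal_mono ENNReal.one_ne_top (hp1 k))
  -- the fallback pick distributions
  have hsum : ∀ i : Fin q,
      ∑ k : {k // i ∈ U k}, ENNReal.ofReal (y k.1 / S i) = 1 := by
    intro i
    have hSpos : 0 < S i := lt_of_lt_of_le one_pos (hS1 i)
    rw [← ENNReal.ofReal_sum_of_nonneg (fun k _ => by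
      exact div_nonneg (hy0 k.1) hSpos.le)]
    have h2 : ∑ k : {k // i ∈ U k}, y k.1 / S i = 1 := by
      rw [← Finset.sum_div, div_eq_one_iff_eq (ne_of_gt hSpos)]
      exact (Finset.sum_subtype _ (fun x => by simp) y).symm
    rw [h2, ENNReal.ofReal_one]
  let pick : ∀ i : Fin q, PMF {k // i ∈ U k} := fun i =>
    PMF.ofFintype (fun k => ENNReal.ofReal (y k.1 / S i)) (hsum i)
  -- the probability space
  let μb : Measure (Fin K → Bool) := Measure.pi fun k => (bern k).toMeasure
  let μs : Measure (∀ i : Fin q, {k // i ∈ U k}) := Measure.pi fun i => (pick i).toMeasure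
  let μ : Measure ((Fin K → Bool) × (∀ i : Fin q, {k // i ∈ U k})) := μb.prod μs
  have hallmeas : ∀ s : Set ((Fin K → Bool) × (∀ i : Fin q, {k // i ∈ U k})),
      MeasurableSet s := fun s => (Set.toFinite s).measurableSet
  -- the events
  let A : Fin K → Set ((Fin K → Bool) × (∀ i : Fin q, {k // i ∈ U k})) := fun k =>
    {ω | ω.1 k = true ∨ ∃ i, i ∈ U k ∧ (∀ j, i ∈ U j → ω.1 j = false) ∧ ((ω.2 i).1 = k)}
  refine ⟨_, _, μ, inferInstance, fun k ω => if ω ∈ A k then 1 else 0,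
    fun k => measurable_of_countable _, fun k ω => by
      by_cases h : ω ∈ A k <;> simp [h], ?_, ?_⟩
  · -- coverage, surely
    refine Filter.Eventually.of_forall fun ω => fun i => ?_
    by_cases hcovd : ∃ k, i ∈ U k ∧ ω.1 k = true
    · obtain ⟨k, hk, hb⟩ := hcovd
      exact ⟨k, hk, if_pos (Or.inl hb)⟩
    · push_neg at hcovd
      simp only [Bool.not_eq_true] at hcovd
      exact ⟨(ω.2 i).1, (ω.2 i).2,
        if_pos (Or.inr ⟨i, (ω.2 i).2, fun j hj => hcovd j hj, rfl⟩)⟩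
  · -- expectation bound
    intro k
    have hYind : (fun ω => if ω ∈ A k then (1:ℝ) else 0)
        = (A k).indicator fun _ => (1:ℝ) := by
      funext ω; rw [Set.indicator_apply]
    have hint : ∫ ω, (if ω ∈ A k then (1:ℝ) else 0) ∂μ = (μ (A k)).toReal := by
      rw [hYind, integral_indicator_const (1:ℝ) (hallmeas (A k)), smul_eq_mul, mul_one, measureReal_def]
    rw [hint]
    -- the union bound pieces
    have hBval : μb (Function.eval k ⁻¹' ({true} : Set Bool)) = p k := by
      rw [Set.eval_preimage]
      rw [Measure.pi_pi]
      rw [Finset.prod_eq_single k]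
      · rw [Function.update_self]
        rw [PMF.toMeasure_apply_singleton _ _ (measurableSet_singleton true)]
        exact (PMF.bernoulli_apply _ _).trans (ENNReal.coe_toNNReal (by simp [hpdef]))
      · intro j _ hj
        rw [Function.update_of_ne hj]
        exact measure_univ
      · simp
    have hDval : ∀ i : Fin q, μb {b | ∀ j, i ∈ U j → b j = false}
        ≤ ENNReal.ofReal (Real.exp (-c)) := by
      intro i
      have hDeq : {b : Fin K → Bool | ∀ j, i ∈ U j → b j = false}
          = Set.pi Set.univ (fun j => if i ∈ U j then ({false} : Set Bool) else Set.univ) := by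
        ext b
        simp only [Set.mem_setOf_eq, Set.mem_pi, Set.mem_univ, forall_true_left]
        constructor
        · intro h j
          by_cases hj : i ∈ U j <;> simp [hj, h j]
        · intro h j hj
          have := h j
          simpa [hj] using this
      rw [hDeq, Measure.pi_pi]
      have hfac : ∀ j : Fin K, (bern j).toMeasure
          (if i ∈ U j then ({false} : Set Bool) else Set.univ)
          = if i ∈ U j then ENNReal.ofReal (1 - min 1 (c * y j)) else 1 := by
        intro j
        by_cases hj : i ∈ U j
        · simp only [hj, if_true]
          rw [PMF.toMeasure_apply_singleton _ _ (measurableSet_singleton false)]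
          show (((1 - (p j).toNNReal : NNReal)) : ℝ≥0∞) = _
          rw [ENNReal.coe_sub, ENNReal.coe_toNNReal (by simp [hpdef]), ENNReal.coe_one]
          rw [hpdef]
          rw [ENNReal.ofReal_sub _ (hm0 j), ENNReal.ofReal_one]
        · simp only [hj, if_false]
          exact measure_univ
      simp only [hfac]
      rw [← Finset.prod_filter]
      rw [← ENNReal.ofReal_prod_of_nonneg (fun j _ => by
        have := min_le_left 1 (c * y j); linarith)]
      exact ENNReal.ofReal_le_ofReal
        (aux_prod_bound c hc0 _ y hy0 (hS1 i))
    have hEval : ∀ i : Fin q, i ∈ U k →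
        μs (Function.eval i ⁻¹' {x : {k' // i ∈ U k'} | (x : Fin K) = k})
        ≤ ENNReal.ofReal (y k) := by
      intro i hik
      rw [Set.eval_preimage, Measure.pi_pi]
      have hset : {x : {k' // i ∈ U k'} | (x : Fin K) = k} = {⟨k, hik⟩} := by
        ext x
        simp [Subtype.ext_iff]
      rw [Finset.prod_eq_single i]
      · rw [Function.update_self, hset,
          PMF.toMeasure_apply_singleton _ _ (measurableSet_singleton _)]
        show ENNReal.ofReal (y k / S i) ≤ _
        exact ENNReal.ofReal_le_ofReal
          (div_le_self (hy0 k) (hS1 i))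
      · intro j _ hj
        rw [Function.update_of_ne hj]
        exact measure_univ
      · simp
    -- union bound
    have hsub : A k ⊆ ((Function.eval k ⁻¹' ({true} : Set Bool)) ×ˢ Set.univ)
        ∪ ⋃ i ∈ U k, ({b : Fin K → Bool | ∀ j, i ∈ U j → b j = false}
            ×ˢ (Function.eval i ⁻¹' {x : {k' // i ∈ U k'} | (x : Fin K) = k})) := by
      rintro ω (hb | ⟨i, hiU, hunc, hσ⟩)
      · exact Or.inl ⟨hb, trivial⟩
      · exact Or.inr (Set.mem_biUnion hiU ⟨hunc, hσ⟩)
    have hμA : μ (A k) ≤ ENNReal.ofReal (c * y k + y k) := by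
      calc μ (A k) ≤ _ := measure_mono hsub
        _ ≤ μ ((Function.eval k ⁻¹' ({true} : Set Bool)) ×ˢ Set.univ)
            + μ (⋃ i ∈ U k, ({b : Fin K → Bool | ∀ j, i ∈ U j → b j = false}
              ×ˢ (Function.eval i ⁻¹' {x : {k' // i ∈ U k'} | (x : Fin K) = k}))) :=
            measure_union_le _ _
        _ ≤ μ ((Function.eval k ⁻¹' ({true} : Set Bool)) ×ˢ Set.univ)
            + ∑ i ∈ U k, μ ({b : Fin K → Bool | ∀ j, i ∈ U j → b j = false}
              ×ˢ (Function.eval i ⁻¹' {x : {k' // i ∈ U k'} | (x : Fin K) = k})) := by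
            gcongr
            exact measure_biUnion_finset_le _ _
        _ ≤ ENNReal.ofReal (c * y k)
            + ∑ i ∈ U k, ENNReal.ofReal (Real.exp (-c)) * ENNReal.ofReal (y k) := by
            gcongr with i hi
            · rw [Measure.prod_prod, measure_univ, mul_one, hBval]
              exact ENNReal.ofReal_le_ofReal (min_le_right _ _)
            · rw [Measure.prod_prod]
              exact mul_le_mul' (hDval i) (hEval i hi)
        _ ≤ ENNReal.ofReal (c * y k)
            + (q : ℝ≥0∞) * (ENNReal.ofReal (Real.exp (-c)) * ENNReal.ofReal (y k)) := by
            rw [Finset.sum_const, nsmul_eq_mul]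
            have hcard : ((U k).card : ℝ≥0∞) ≤ (q : ℝ≥0∞) := by
              have h : (U k).card ≤ q := by simpa using Finset.card_le_univ (U k)
              exact_mod_cast h
            exact add_le_add_right (mul_le_mul_left hcard _) _
        _ = ENNReal.ofReal (c * y k) + ENNReal.ofReal ((q : ℝ) * (Real.exp (-c) * y k)) := by
            rw [← ENNReal.ofReal_mul (Real.exp_pos _).le, ← ENNReal.ofReal_natCast q,
              ← ENNReal.ofReal_mul (by exact_mod_cast hqpos.le)]
        _ = ENNReal.ofReal (c * y k + y k) := by
            rw [← ENNReal.ofReal_add (mul_nonneg hc0 (hy0 k))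
              (mul_nonneg hqpos.le (mul_nonneg (Real.exp_pos _).le (hy0 k)))]
            congr 1
            rw [hcdef, Real.exp_neg, Real.exp_log hqpos]
            field_simp
    refine ENNReal.toReal_le_of_le_ofReal
      (mul_nonneg (by linarith) (hy0 k)) (hμA.trans ?_)
    apply ENNReal.ofReal_le_ofReal
    nlinarith [hy0 k]
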